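/- For all x in (0, π/2), -x²/2 - log(cos x) > 0. -/

import Mathlib

open Real Set

lemma aux_deriv_6 (x : ℝ) (hx : Real.cos x ≠ 0) :
    HasDerivAt (fun y => -y^2/2 - Real.log (Real.cos y)) (Real.tan x - x) x := by
  have h1 : HasDerivAt (fun y : ℝ => -y^2/2) (-x) x := by
    have := ((hasDerivAt_pow 2 x).neg.div_const 2)
    refine this.congr_deriv ?_
    norm_num
    ring
  have h2 : HasDerivAt (fun y => Real.log (Real.cos y)) (-Real.tan x) x := by
    have := (Real.hasDerivAt_cos x).log hx
    convert this using 1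
    rw [Real.tan_eq_sin_div_cos]
    ring
  have := h1.sub h2
  refine this.congr_deriv ?_
  ring

theorem stmt_6 : ∀ x ∈ Set.Ioo (0:ℝ) (Real.pi/2), -x^2/2 - Real.log (Real.cos x) > 0 := by
  intro x hx
  set f : ℝ → ℝ := fun y => -y^2/2 - Real.log (Real.cos y) with hf
  have hsub : Set.Ico (0:ℝ) (π/2) ⊆ Set.Ioo (-(π/2)) (π/2) := fun y hy =>
    ⟨lt_of_lt_of_le (by simp [Real.pi_pos.le]; positivity) hy.1, hy.2⟩
  have hcospos : ∀ y ∈ Set.Ico (0:ℝ) (π/2), 0 < Real.cos y := fun y hy =>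
    Real.cos_pos_of_mem_Ioo (hsub hy)
  have hmono : StrictMonoOn f (Set.Ico 0 (π/2)) := by
    apply strictMonoOn_of_deriv_pos (convex_Ico _ _)
    · apply ContinuousOn.sub
      · fun_prop
      · exact ContinuousOn.log (Real.continuous_cos.continuousOn)
          (fun y hy => (hcospos y hy).ne')
    · intro y hy
      rw [interior_Ico] at hy
      have hy' : y ∈ Set.Ico (0:ℝ) (π/2) := ⟨hy.1.le, hy.2⟩
      rw [(aux_deriv_6 y (hcospos y hy').ne').deriv]
      have := Real.lt_tan hy.1 hy.2
      linarith
  have h0 : f 0 = 0 := by simp [hf]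
  have := hmono ⟨le_refl 0, by positivity⟩ ⟨hx.1.le, hx.2⟩ hx.1
  rw [h0] at this
  exact this
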